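/- A 3×3 complex matrix S is a trifocal essential matrix if and only if (trace(S Sᵀ) I − 2 S Sᵀ)² S = 0 (the 3×3 zero matrix). -/

import Mathlib

open Matrix

def IsTrifocalEssential (S : Matrix (Fin 3) (Fin 3) ℂ) : Prop :=
  ∃ s₁ t₁ t₂ s₂ : Fin 3 → ℂ, s₁ ≠ 0 ∧ s₂ ≠ 0 ∧ s₁ ⬝ᵥ s₁ = 0 ∧ s₂ ⬝ᵥ s₂ = 0 ∧
    S = vecMulVec s₁ t₁ + vecMulVec t₂ s₂

-- test basic helper lemmas
section helpers
variable {a b c y : Fin 3 → ℂ}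

lemma cross0 (ha : a ≠ 0) (h : crossProduct a b = 0) : ∃ c : ℂ, b = c • a := by
  have h2 : crossProduct b a = 0 := by rw [← cross_anticomm, h, neg_zero]
  have := (crossProduct_ne_zero_iff_linearIndependent (v := b) (w := a)).not
  rw [not_ne_iff, linearIndependent_fin2] at this
  have h3 := this.1 h2
  simp only [Matrix.cons_val_one, Matrix.head_cons, Matrix.cons_val_zero, not_and, not_forall] at h3
  obtain ⟨c, hc⟩ := h3 ha
  exact ⟨c, (not_ne_iff.mp hc).symm⟩

lemma bac_cab (a b c : Fin 3 → ℂ) :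
    crossProduct a (crossProduct b c) = (a ⬝ᵥ c) • b - (a ⬝ᵥ b) • c := by
  ext i
  fin_cases i <;>
    simp [crossProduct, dotProduct, Fin.sum_univ_three] <;> ring

lemma triple_exp (a b c y : Fin 3 → ℂ) :
    ((crossProduct a b) ⬝ᵥ c) • y =
      ((crossProduct y b) ⬝ᵥ c) • a + ((crossProduct a y) ⬝ᵥ c) • b
        + ((crossProduct a b) ⬝ᵥ y) • c := by
  ext i
  fin_cases i <;>
    simp [crossProduct, dotProduct, Fin.sum_univ_three] <;> ring
end helpers

section helpers2
variable {a b u v : Fin 3 → ℂ}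

lemma lagrange (a b : Fin 3 → ℂ) :
    (crossProduct a b) ⬝ᵥ (crossProduct a b) = (a ⬝ᵥ a) * (b ⬝ᵥ b) - (a ⬝ᵥ b) ^ 2 := by
  simp [crossProduct, dotProduct, Fin.sum_univ_three]; ring

lemma iso2 (ha : a ≠ 0) (haa : a ⬝ᵥ a = 0) (hbb : b ⬝ᵥ b = 0) (hab : a ⬝ᵥ b = 0) :
    ∃ c : ℂ, b = c • a := by
  set w := crossProduct a b with hw
  have h1 : crossProduct a w = 0 := by
    rw [hw, bac_cab, hab, haa]; simp
  obtain ⟨c, hc⟩ := cross0 ha h1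
  have h2 : crossProduct b w = 0 := by
    rw [hw, bac_cab, hbb]
    rw [show b ⬝ᵥ a = a ⬝ᵥ b from dotProduct_comm b a, hab]; simp
  have h3 : crossProduct b w = -c ^ 2 • a := by
    rw [hc]
    have : crossProduct b (c • a) = c • crossProduct b a := by
      simp [LinearMap.map_smul]
    rw [this, ← cross_anticomm]
    rw [← hw, hc]
    ext i; simp; ring
  have h4 : c ^ 2 • a = (0 : Fin 3 → ℂ) := by
    have := h3.symm.trans h2
    have : -c ^ 2 • a = 0 := this
    simpa [neg_smul, neg_eq_zero] using this
  have hc0 : c = 0 := by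
    by_contra hcne
    exact ha (by simpa [smul_eq_zero, pow_eq_zero_iff, hcne] using h4)
  have hw0 : crossProduct a b = 0 := by rw [← hw, hc, hc0]; simp
  exact cross0 ha hw0

-- vecMulVec algebra
lemma vmv_mul_vmv (a b c d : Fin 3 → ℂ) :
    vecMulVec a b * vecMulVec c d = (b ⬝ᵥ c) • vecMulVec a d := by
  ext i j
  simp [vecMulVec_apply, Matrix.mul_apply, dotProduct, Fin.sum_univ_three]
  ring

lemma vmv_transpose (a b : Fin 3 → ℂ) : (vecMulVec a b)ᵀ = vecMulVec b a := by
  ext i j; simp [vecMulVec_apply, Matrix.transpose_apply]; ring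

lemma vmv_trace (a b : Fin 3 → ℂ) : (vecMulVec a b).trace = a ⬝ᵥ b := by
  simp [Matrix.trace_fin_three, vecMulVec_apply, dotProduct, Fin.sum_univ_three]

lemma vmv_mulVec (a b x : Fin 3 → ℂ) :
    (vecMulVec a b).mulVec x = (b ⬝ᵥ x) • a := by
  ext i; simp [vecMulVec_apply, Matrix.mulVec, dotProduct, Fin.sum_univ_three]; ring

lemma mul_vmv (M : Matrix (Fin 3) (Fin 3) ℂ) (a b : Fin 3 → ℂ) :
    M * vecMulVec a b = vecMulVec (M.mulVec a) b := by
  ext i j; simp [vecMulVec_apply, Matrix.mul_apply, Matrix.mulVec, dotProduct,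
    Fin.sum_univ_three]; ring

lemma vmv_eq_zero_iff (a b : Fin 3 → ℂ) : vecMulVec a b = 0 ↔ a = 0 ∨ b = 0 := by
  constructor
  · intro h
    by_cases ha : a = 0
    · exact Or.inl ha
    · right
      obtain ⟨i, hi⟩ : ∃ i, a i ≠ 0 := by
        by_contra hno; push_neg at hno; exact ha (funext hno)
      ext j
      have := congrFun (congrFun h i) j
      simp [vecMulVec_apply] at this
      rcases this with h' | h'
      · exact absurd h' hi
      · exact h'
  · rintro (h | h) <;> subst h <;> ext i j <;> simp [vecMulVec_apply]
end helpers2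

section helpers3
variable {M : Matrix (Fin 3) (Fin 3) ℂ}

lemma symdot (hs : Mᵀ = M) (a b : Fin 3 → ℂ) :
    (M.mulVec a) ⬝ᵥ b = a ⬝ᵥ (M.mulVec b) := by
  rw [Matrix.dotProduct_mulVec, ← hs, Matrix.vecMul_transpose, hs]

lemma cross_col12 (M : Matrix (Fin 3) (Fin 3) ℂ) :
    crossProduct (fun i => M i 1) (fun i => M i 2) = fun k => M.adjugate 0 k := by
  ext k; fin_cases k <;> simp [Matrix.adjugate_fin_three, crossProduct] <;> ring

lemma cross_col20 (M : Matrix (Fin 3) (Fin 3) ℂ) :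
    crossProduct (fun i => M i 2) (fun i => M i 0) = fun k => M.adjugate 1 k := by
  ext k; fin_cases k <;> simp [Matrix.adjugate_fin_three, crossProduct] <;> ring

lemma cross_col01 (M : Matrix (Fin 3) (Fin 3) ℂ) :
    crossProduct (fun i => M i 0) (fun i => M i 1) = fun k => M.adjugate 2 k := by
  ext k; fin_cases k <;> simp [Matrix.adjugate_fin_three, crossProduct] <;> ring

lemma adjrow (hadj : M.adjugate = 0) (j₁ j₂ : Fin 3) :
    crossProduct (fun i => M i j₁) (fun i => M i j₂) = 0 := by
  have h12 : crossProduct (fun i => M i 1) (fun i => M i 2) = 0 := by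
    rw [cross_col12, hadj]; rfl
  have h20 : crossProduct (fun i => M i 2) (fun i => M i 0) = 0 := by
    rw [cross_col20, hadj]; rfl
  have h01 : crossProduct (fun i => M i 0) (fun i => M i 1) = 0 := by
    rw [cross_col01, hadj]; rfl
  have anti : ∀ a b : Fin 3 → ℂ, crossProduct a b = 0 → crossProduct b a = 0 := by
    intro a b h; rw [← cross_anticomm, h, neg_zero]
  fin_cases j₁ <;> fin_cases j₂ <;>
    simp only [Fin.isValue] <;>
    first
      | exact cross_self _
      | exact h12 | exact h20 | exact h01
      | exact anti _ _ h12 | exact anti _ _ h20 | exact anti _ _ h01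

lemma tradj (M : Matrix (Fin 3) (Fin 3) ℂ) :
    (M.adjugate).trace * 2 = M.trace ^ 2 - (M * M).trace := by
  simp [Matrix.trace_fin_three, Matrix.adjugate_fin_three, Matrix.mul_apply,
    Fin.sum_univ_three]
  ring

lemma col_ne_zero_of_ne_zero (hM : M ≠ 0) : ∃ j, (fun i => M i j) ≠ (0 : Fin 3 → ℂ) := by
  by_contra h
  push_neg at h
  apply hM
  ext i j
  have := congrFun (h j) i
  simpa using this

lemma sym_rank1 (hs : Mᵀ = M) {u : Fin 3 → ℂ} (hu : u ≠ 0)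
    (hcols : ∀ j, ∃ m : ℂ, (fun i => M i j) = m • u) :
    ∃ c : ℂ, M = c • vecMulVec u u := by
  choose m hm using hcols
  have hM : M = vecMulVec u m := by
    ext i j
    have := congrFun (hm j) i
    simp at this
    simp [vecMulVec_apply, this, mul_comm]
  obtain ⟨i₀, hi₀⟩ : ∃ i, u i ≠ 0 := by
    by_contra hno; push_neg at hno; exact hu (funext hno)
  have hsym' : vecMulVec m u = vecMulVec u m := by
    rw [← vmv_transpose, ← hM, hs, hM]
  refine ⟨m i₀ / u i₀, ?_⟩
  rw [hM]
  ext i j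
  have h1 := congrFun (congrFun hsym' i₀) j
  simp [vecMulVec_apply] at h1 ⊢
  field_simp
  linear_combination (-(u i)) * h1
end helpers3

section helpers4
variable {M R : Matrix (Fin 3) (Fin 3) ℂ}

lemma smul_vmv_cancel {α β : ℂ} {g : Fin 3 → ℂ} (hg : g ≠ 0)
    (h : α • vecMulVec g g = β • vecMulVec g g) : α = β := by
  obtain ⟨i₀, hi₀⟩ : ∃ i, g i ≠ 0 := by
    by_contra hno; push_neg at hno; exact hg (funext hno)
  have := congrFun (congrFun h i₀) i₀
  simp [vecMulVec_apply] at this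
  rcases this with h' | h'
  · exact h'
  · exact absurd h' hi₀

lemma sym_apply (hs : Mᵀ = M) (i j : Fin 3) : M i j = M j i := by
  have h := congrFun (congrFun hs j) i
  rw [Matrix.transpose_apply] at h
  exact h

lemma col_dot_col (hs : Mᵀ = M) (j₁ j₂ : Fin 3) :
    (fun i => M i j₁) ⬝ᵥ (fun i => M i j₂) = (M * M) j₁ j₂ := by
  simp [Matrix.mul_apply, dotProduct, Fin.sum_univ_three,
    sym_apply hs j₁ 0, sym_apply hs j₁ 1, sym_apply hs j₁ 2]

-- Lemma C: symmetric square-zero matrices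
lemma sq_zero_struct (hs : Mᵀ = M) (h2 : M * M = 0) (hM : M ≠ 0) :
    ∃ (c : ℂ) (u : Fin 3 → ℂ), M = c • vecMulVec u u ∧ u ≠ 0 ∧ u ⬝ᵥ u = 0 ∧ c ≠ 0 := by
  obtain ⟨j₀, hj₀⟩ := col_ne_zero_of_ne_zero hM
  set u : Fin 3 → ℂ := fun i => M i j₀ with hu
  have hdot : ∀ j₁ j₂ : Fin 3, (fun i => M i j₁) ⬝ᵥ (fun i => M i j₂) = 0 := by
    intro j₁ j₂; rw [col_dot_col hs, h2]; rfl
  have huu : u ⬝ᵥ u = 0 := hdot j₀ j₀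
  have hcols : ∀ j, ∃ m : ℂ, (fun i => M i j) = m • u := by
    intro j
    exact iso2 hj₀ huu (hdot j j) (hdot j₀ j)
  obtain ⟨c, hc⟩ := sym_rank1 hs hj₀ hcols
  have hcne : c ≠ 0 := by
    intro h; apply hM; rw [hc, h, zero_smul]
  exact ⟨c, u, hc, hj₀, huu, hcne⟩

-- cancel invertible factor
lemma cancel_left (h : IsUnit R.det) (hRB : R * M = 0) : M = 0 := by
  have h1 := congrArg (fun X => R⁻¹ * X) hRB
  simp only [Matrix.mul_zero, ← Matrix.mul_assoc, Matrix.nonsing_inv_mul R h, Matrix.one_mul]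
    at h1
  exact h1

lemma smul_vmv_sq (c : ℂ) (g : Fin 3 → ℂ) :
    (c • vecMulVec g g) * (c • vecMulVec g g) = (c * c * (g ⬝ᵥ g)) • vecMulVec g g := by
  rw [Matrix.smul_mul, Matrix.mul_smul, vmv_mul_vmv, smul_smul, smul_smul]

-- RANK1 lemma
lemma rank1_lemma {ρ : ℂ} (hs : Rᵀ = R) (hR : R ≠ 0) (h2 : R * R = ρ • R)
    (htr : R.trace = ρ) (hρ : ρ ≠ 0) :
    ∃ (c : ℂ) (w : Fin 3 → ℂ), R = c • vecMulVec w w ∧ w ≠ 0 ∧ c * (w ⬝ᵥ w) = ρ ∧ c ≠ 0 := by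
  have hdet : R.det = 0 := by
    by_contra hd
    have hunit : IsUnit R.det := isUnit_iff_ne_zero.mpr hd
    have hR1 : R = ρ • 1 := by
      have h3 := congrArg (fun X => X * R⁻¹) h2
      rw [Matrix.mul_assoc, Matrix.mul_nonsing_inv R hunit, Matrix.mul_one,
        Matrix.smul_mul, Matrix.mul_nonsing_inv R hunit] at h3
      exact h3
    rw [hR1] at htr
    simp [Matrix.trace_smul, Matrix.trace_one] at htr
    have h4 : (2 : ℂ) * ρ = 0 := by linear_combination htr
    simp at h4
    exact hρ h4
  have hGsq : R.adjugate * R.adjugate = (ρ ^ 2) • R.adjugate := by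
    rw [← Matrix.adjugate_mul_distrib, h2, Matrix.adjugate_smul]
    norm_num
  have htrG : (R.adjugate).trace = 0 := by
    have h1 := tradj R
    rw [h2, Matrix.trace_smul, htr] at h1
    simp only [smul_eq_mul] at h1
    linear_combination h1 / 2
  have hGadj : (R.adjugate).adjugate = 0 := by
    rw [Matrix.adjugate_adjugate R (by simp)]
    simp [hdet]
  have hGsym : (R.adjugate)ᵀ = R.adjugate := by
    rw [Matrix.adjugate_transpose, hs]
  have hG : R.adjugate = 0 := by
    by_contra hGne
    obtain ⟨j₀, hj₀⟩ := col_ne_zero_of_ne_zero hGne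
    have hcols : ∀ j, ∃ m : ℂ, (fun i => R.adjugate i j) = m • (fun i => R.adjugate i j₀) := by
      intro j
      exact cross0 hj₀ (adjrow hGadj j₀ j)
    obtain ⟨c, hc⟩ := sym_rank1 hGsym hj₀ hcols
    set g : Fin 3 → ℂ := fun i => R.adjugate i j₀ with hg
    have hcne : c ≠ 0 := fun h => hGne (by rw [hc, h, zero_smul])
    have e2 : c * c * (g ⬝ᵥ g) = ρ ^ 2 * c := by
      apply smul_vmv_cancel hj₀
      rw [← smul_vmv_sq, ← hc, hGsq, hc, smul_smul]
    have e3 : c * (g ⬝ᵥ g) = 0 := by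
      have h5 := htrG
      rw [hc, Matrix.trace_smul, vmv_trace] at h5
      simpa using h5
    have h6 : ρ ^ 2 * c = 0 := by
      rw [← e2]
      linear_combination c * e3
    rcases mul_eq_zero.mp h6 with h | h
    · exact hρ (pow_eq_zero_iff (by norm_num) |>.mp h)
    · exact hcne h
  obtain ⟨j₀, hj₀⟩ := col_ne_zero_of_ne_zero hR
  have hcols : ∀ j, ∃ m : ℂ, (fun i => R i j) = m • (fun i => R i j₀) := by
    intro j
    exact cross0 hj₀ (adjrow hG j₀ j)
  obtain ⟨c, hc⟩ := sym_rank1 hs hj₀ hcols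
  set w : Fin 3 → ℂ := fun i => R i j₀ with hw
  have htr2 : c * (w ⬝ᵥ w) = ρ := by
    rw [hc, Matrix.trace_smul, vmv_trace] at htr
    simpa using htr
  have hcne : c ≠ 0 := fun h => hR (by rw [hc, h, zero_smul])
  exact ⟨c, w, hc, hj₀, htr2, hcne⟩
end helpers4

section helpers5
variable {N : Matrix (Fin 3) (Fin 3) ℂ} {s k : Fin 3 → ℂ}

lemma ne_zero_coord {v : Fin 3 → ℂ} (hv : v ≠ 0) : ∃ i, v i ≠ 0 := by
  by_contra hno; push_neg at hno; exact hv (funext hno)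

lemma span2 (hsne : s ≠ 0) (hss : s ⬝ᵥ s = 0) (hsk : s ⬝ᵥ k = 0)
    (hcr : crossProduct s k ≠ 0) :
    ∀ y, s ⬝ᵥ y = 0 → ∃ α β : ℂ, y = α • s + β • k := by
  intro y hy
  set u' := crossProduct s k with hu'
  have huu : u' ⬝ᵥ u' = 0 := by
    rw [hu', lagrange, hss, hsk]; ring
  have hsu : s ⬝ᵥ u' = 0 := dot_self_cross s k
  obtain ⟨γ, hγ⟩ := iso2 hsne hss huu hsu
  obtain ⟨i, hi⟩ := ne_zero_coord hcr
  set z : Fin 3 → ℂ := Pi.single i 1 with hz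
  have hΔ : u' ⬝ᵥ z ≠ 0 := by
    rw [hz, dotProduct_single, mul_one]; exact hi
  have htriple := triple_exp s k z y
  have hzero : u' ⬝ᵥ y = 0 := by
    rw [hγ, smul_dotProduct, hy, smul_eq_mul, mul_zero]
  rw [← hu', hzero, zero_smul, add_zero] at htriple
  refine ⟨(u' ⬝ᵥ z)⁻¹ * ((crossProduct y k) ⬝ᵥ z), (u' ⬝ᵥ z)⁻¹ * ((crossProduct s y) ⬝ᵥ z), ?_⟩
  have := congrArg (fun v => (u' ⬝ᵥ z)⁻¹ • v) htriple
  simp only [smul_add, smul_smul, inv_mul_cancel₀ hΔ, one_smul] at this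
  exact this

lemma prop_lemma (hs : Nᵀ = N) {lam : ℂ} (hsne : s ≠ 0) (hss : s ⬝ᵥ s = 0)
    (hNs : N.mulVec s = lam • s) (hNk : N.mulVec k = 0) (hsk : s ⬝ᵥ k = 0)
    (hcr : crossProduct s k ≠ 0) :
    ∀ x y, s ⬝ᵥ x = 0 → s ⬝ᵥ y = 0 → x ⬝ᵥ N.mulVec y = 0 := by
  intro x y hx hy
  obtain ⟨α, β, hab⟩ := span2 hsne hss hsk hcr y hy
  rw [hab, Matrix.mulVec_add, Matrix.mulVec_smul, Matrix.mulVec_smul, hNs, hNk, smul_zero,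
    add_zero, smul_smul]
  rw [dotProduct_smul, smul_eq_mul]
  rw [show x ⬝ᵥ s = s ⬝ᵥ x from dotProduct_comm x s, hx, mul_zero]
end helpers5

section keyprop
variable {N : Matrix (Fin 3) (Fin 3) ℂ}

lemma trace_one3 : (1 : Matrix (Fin 3) (Fin 3) ℂ).trace = 3 := by
  simp [Matrix.trace_one]

lemma sub_mul_expand (a b : ℂ) (X Y : Matrix (Fin 3) (Fin 3) ℂ) :
    (a • 1 - X) * (b • (1 : Matrix (Fin 3) (Fin 3) ℂ) - Y)
      = (a * b) • (1 : Matrix (Fin 3) (Fin 3) ℂ) - a • Y - b • X + X * Y := by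
  simp only [Matrix.sub_mul, Matrix.mul_sub, Matrix.smul_mul, Matrix.mul_smul,
    Matrix.one_mul, Matrix.mul_one, smul_smul, smul_sub, smul_add]
  rw [mul_comm b a]
  abel

lemma dot_expand (α : ℂ) (p q : Fin 3 → ℂ) :
    (α • p + q) ⬝ᵥ (α • p + q)
      = α^2*(p ⬝ᵥ p) + α*(p ⬝ᵥ q) + α*(q ⬝ᵥ p) + q ⬝ᵥ q := by
  simp only [dotProduct_add, add_dotProduct, dotProduct_smul, smul_dotProduct, smul_eq_mul]
  ring

lemma iso_vec_ne : (![1, Complex.I, 0] : Fin 3 → ℂ) ≠ 0 := by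
  intro h
  have := congrFun h 0
  simp at this

lemma iso_vec_iso : (![1, Complex.I, 0] : Fin 3 → ℂ) ⬝ᵥ ![1, Complex.I, 0] = 0 := by
  simp [dotProduct, Fin.sum_univ_three, Complex.I_mul_I]

lemma keyprop (hsym : Nᵀ = N)
    (hH : (N.trace • (1 : Matrix (Fin 3) (Fin 3) ℂ) - (2 : ℂ) • N) ^ 2 * N = 0) :
    ∃ s : Fin 3 → ℂ, s ≠ 0 ∧ s ⬝ᵥ s = 0 ∧
      ∀ x y, s ⬝ᵥ x = 0 → s ⬝ᵥ y = 0 → x ⬝ᵥ N.mulVec y = 0 := by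
  set σ := N.trace with hσ
  set D : Matrix (Fin 3) (Fin 3) ℂ := σ • 1 - (2 : ℂ) • N with hD
  have hDsym : Dᵀ = D := by
    rw [hD, Matrix.transpose_sub, Matrix.transpose_smul, Matrix.transpose_smul,
      Matrix.transpose_one, hsym]
  have hDN : D * N = N * D := by
    rw [hD, Matrix.sub_mul, Matrix.mul_sub, Matrix.smul_mul, Matrix.mul_smul,
      Matrix.smul_mul, Matrix.mul_smul, Matrix.one_mul, Matrix.mul_one]
  have hH' : D * D * N = 0 := by rw [← pow_two, hH]
  have hAexp : D * N = σ • N - (2 : ℂ) • (N * N) := by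
    rw [hD, Matrix.sub_mul, Matrix.smul_mul, Matrix.one_mul, Matrix.smul_mul]
  by_cases hAne : D * N = 0
  · -- R2 : N*N = (σ/2) • N
    have hNN : N * N = (σ / 2) • N := by
      rw [hAexp] at hAne
      ext i j
      have h := congrFun (congrFun hAne i) j
      simp only [Matrix.sub_apply, Matrix.smul_apply, smul_eq_mul, Matrix.zero_apply] at h
      simp only [Matrix.smul_apply, smul_eq_mul]
      linear_combination (-1/2 : ℂ) * h
    by_cases hσ0 : σ = 0
    · -- N² = 0
      rw [hσ0, zero_div, zero_smul] at hNN
      by_cases hN0 : N = 0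
      · exact ⟨![1, Complex.I, 0], iso_vec_ne, iso_vec_iso, fun x y _ _ => by
          rw [hN0]; simp [Matrix.zero_mulVec]⟩
      · obtain ⟨c, u, hNc, hune, huu, hcne⟩ := sq_zero_struct hsym hNN hN0
        refine ⟨u, hune, huu, fun x y hx hy => ?_⟩
        rw [hNc, Matrix.smul_mulVec, vmv_mulVec, hy]
        simp
    · -- N² = (σ/2)N, σ ≠ 0
      set M₂ : Matrix (Fin 3) (Fin 3) ℂ := (σ/2) • 1 - N with hM₂
      have hM₂sym : M₂ᵀ = M₂ := by
        rw [hM₂, Matrix.transpose_sub, Matrix.transpose_smul, Matrix.transpose_one, hsym]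
      have hM₂sq : M₂ * M₂ = (σ/2) • M₂ := by
        rw [hM₂, sub_mul_expand, hNN, smul_sub, smul_smul]
        abel
      have htrM₂ : M₂.trace = σ/2 := by
        rw [hM₂, Matrix.trace_sub, Matrix.trace_smul, trace_one3, ← hσ]
        simp only [smul_eq_mul]
        ring
      have hM₂ne : M₂ ≠ 0 := by
        intro h0
        rw [hM₂, sub_eq_zero] at h0
        have h1 : σ = 3 * (σ/2) := by
          rw [hσ]
          conv_lhs => rw [← h0]
          rw [Matrix.trace_smul, trace_one3]
          simp only [smul_eq_mul]
          ring
        exact hσ0 (by linear_combination -2 * h1)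
      have hσ2 : σ / 2 ≠ 0 := div_ne_zero hσ0 two_ne_zero
      obtain ⟨c, w, hM₂c, hwne, hcw, hcne⟩ := rank1_lemma hM₂sym hM₂ne hM₂sq htrM₂ hσ2
      have hww : w ⬝ᵥ w ≠ 0 := by
        intro h0
        rw [h0, mul_zero] at hcw
        exact hσ2 hcw.symm
      have hNform : N = (σ/2) • 1 - M₂ := by rw [hM₂]; abel
      have hM₂w : M₂.mulVec w = (σ/2) • w := by
        rw [hM₂c, Matrix.smul_mulVec, vmv_mulVec, smul_smul, hcw]
      have hNw : N.mulVec w = 0 := by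
        rw [hNform, Matrix.sub_mulVec, Matrix.smul_mulVec, Matrix.one_mulVec, hM₂w,
          sub_self]
      -- find p ⊥ w nonzero
      have hpex : ∃ i : Fin 3, crossProduct w (Pi.single i 1) ≠ 0 := by
        by_contra hno
        push_neg at hno
        obtain ⟨c₀, hc₀⟩ := cross0 hwne (hno 0)
        obtain ⟨c₁, hc₁⟩ := cross0 hwne (hno 1)
        have h00 : (1 : ℂ) = c₀ * w 0 := by
          have := congrFun hc₀ 0
          simpa [Pi.single_eq_same] using this
        have h01 : (0 : ℂ) = c₀ * w 1 := by
          have := congrFun hc₀ 1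
          simpa [Pi.single_eq_of_ne (show (1 : Fin 3) ≠ 0 by decide)] using this
        have h11 : (1 : ℂ) = c₁ * w 1 := by
          have := congrFun hc₁ 1
          simpa [Pi.single_eq_same] using this
        rcases mul_eq_zero.mp h01.symm with h | h
        · rw [h, zero_mul] at h00
          exact one_ne_zero h00
        · rw [h, mul_zero] at h11
          exact one_ne_zero h11
      obtain ⟨iw, hiw⟩ := hpex
      set p := crossProduct w (Pi.single iw 1) with hp
      have hpne : p ≠ 0 := hiw
      have hwp : w ⬝ᵥ p = 0 := dot_self_cross _ _
      -- construct isotropic s ⊥ w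
      obtain ⟨s, hsne, hss, hsw⟩ :
          ∃ s : Fin 3 → ℂ, s ≠ 0 ∧ s ⬝ᵥ s = 0 ∧ s ⬝ᵥ w = 0 := by
        by_cases hpp : p ⬝ᵥ p = 0
        · exact ⟨p, hpne, hpp, by rw [dotProduct_comm]; exact hwp⟩
        · obtain ⟨α, hα⟩ := IsAlgClosed.exists_pow_nat_eq (k := ℂ) (-(w ⬝ᵥ w)) two_pos
          refine ⟨α • p + crossProduct w p, ?_, ?_, ?_⟩
          · intro h0
            have hps : p ⬝ᵥ (α • p + crossProduct w p) = α * (p ⬝ᵥ p) := by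
              rw [dotProduct_add, dotProduct_smul, smul_eq_mul, dot_cross_self, add_zero]
            rw [h0, dotProduct_zero] at hps
            have hα0 : α = 0 := by
              rcases mul_eq_zero.mp hps.symm with h | h
              · exact h
              · exact absurd h hpp
            rw [hα0] at hα
            exact hww (by linear_combination hα)
          · rw [dot_expand]
            rw [show p ⬝ᵥ crossProduct w p = 0 from dot_cross_self w p]
            rw [show (crossProduct w p) ⬝ᵥ p = 0 from by
                rw [dotProduct_comm]; exact dot_cross_self w p]
            rw [hα, lagrange w p, hwp]
            ring
          · rw [add_dotProduct, smul_dotProduct, smul_eq_mul,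
              show p ⬝ᵥ w = 0 from by rw [dotProduct_comm]; exact hwp,
              show (crossProduct w p) ⬝ᵥ w = 0 from by
                rw [dotProduct_comm]; exact dot_self_cross w p]
            ring
      -- N s = (σ/2) s
      have hNs : N.mulVec s = (σ/2) • s := by
        rw [hNform, Matrix.sub_mulVec, Matrix.smul_mulVec, Matrix.one_mulVec, hM₂c,
          Matrix.smul_mulVec, vmv_mulVec]
        rw [show w ⬝ᵥ s = 0 from by rw [dotProduct_comm]; exact hsw]
        simp
      have hcr : crossProduct s w ≠ 0 := by
        intro h0
        obtain ⟨c₃, hc₃⟩ := cross0 hsne h0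
        apply hww
        rw [hc₃, smul_dotProduct, dotProduct_smul, hss]
        simp
      exact ⟨s, hsne, hss, prop_lemma hsym hsne hss hNs hNw hsw hcr⟩
  · -- R1 : A ≠ 0
    have hA2 : (D*N)*(D*N) = 0 := by
      have h1 : N * (D * N) = D * (N * N) := by
        rw [← Matrix.mul_assoc, ← hDN, Matrix.mul_assoc]
      rw [Matrix.mul_assoc, h1, ← Matrix.mul_assoc, ← Matrix.mul_assoc, hH', Matrix.zero_mul]
    have hAsym : (D*N)ᵀ = D*N := by
      rw [Matrix.transpose_mul, hsym, hDsym, ← hDN]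
    obtain ⟨c, u, hAc, hune, huu, hcne⟩ := sq_zero_struct hAsym hA2 hAne
    have hDu : D.mulVec u = 0 := by
      have h1 : D * (D * N) = 0 := by rw [← Matrix.mul_assoc, hH']
      rw [hAc, Matrix.mul_smul, mul_vmv] at h1
      rcases smul_eq_zero.mp h1 with h | h
      · exact absurd h hcne
      · rcases (vmv_eq_zero_iff _ _).mp h with h' | h'
        · exact h'
        · exact absurd h' hune
    have hNu : N.mulVec u = (σ/2) • u := by
      rw [hD, Matrix.sub_mulVec, Matrix.smul_mulVec, Matrix.smul_mulVec,
        Matrix.one_mulVec] at hDu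
      ext i
      have h2 := congrFun hDu i
      simp only [Pi.sub_apply, Pi.smul_apply, smul_eq_mul, Pi.zero_apply] at h2
      simp only [Pi.smul_apply, smul_eq_mul]
      linear_combination (-1/2 : ℂ) * h2
    by_cases hσ0 : σ = 0
    · -- σ = 0 : N² = μ • u uᵀ, N³ = 0
      have hD0 : D = -((2:ℂ) • N) := by rw [hD, hσ0, zero_smul, zero_sub]
      have hNN2 : N * N = (-c/2) • vecMulVec u u := by
        have h1 : D * N = σ • N - (2:ℂ) • (N * N) := hAexp
        rw [hAc, hσ0, zero_smul, zero_sub] at h1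
        ext i j
        have h2 := congrFun (congrFun h1 i) j
        simp only [Matrix.smul_apply, Matrix.neg_apply, smul_eq_mul, vecMulVec_apply] at h2
        simp only [Matrix.smul_apply, smul_eq_mul, vecMulVec_apply]
        first
          | linear_combination (-1/2 : ℂ) * h2
          | linear_combination (1/2 : ℂ) * h2
          | linear_combination (-2 : ℂ) * h2
          | linear_combination (2 : ℂ) * h2
      have hμ : (-c/2 : ℂ) ≠ 0 := by
        simp only [Ne, div_eq_zero_iff, neg_eq_zero]
        push_neg
        exact ⟨hcne, two_ne_zero⟩
      have hN3 : N * N * N = 0 := by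
        have h1 := hH'
        rw [hD0] at h1
        rw [Matrix.neg_mul, Matrix.mul_neg, neg_neg, Matrix.smul_mul, Matrix.mul_smul,
          smul_smul, Matrix.smul_mul] at h1
        ext i j
        have h2 := congrFun (congrFun h1 i) j
        simp only [Matrix.smul_apply, smul_eq_mul, Matrix.zero_apply] at h2 ⊢
        linear_combination h2 / 4
      have hNu0 : N.mulVec u = 0 := by
        have h1 : N * (N * N) = 0 := by rw [← Matrix.mul_assoc, hN3]
        rw [hNN2, Matrix.mul_smul, mul_vmv] at h1
        rcases smul_eq_zero.mp h1 with h | h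
        · exact absurd h hμ
        · rcases (vmv_eq_zero_iff _ _).mp h with h' | h'
          · exact h'
          · exact absurd h' hune
      have hNNmv : ∀ z : Fin 3 → ℂ, (N * N).mulVec z = ((-c/2) * (u ⬝ᵥ z)) • u := by
        intro z
        rw [hNN2, Matrix.smul_mulVec, vmv_mulVec, smul_smul]
      have hker : ∀ v : Fin 3 → ℂ, N.mulVec v = 0 → ∃ c₅ : ℂ, v = c₅ • u := by
        intro v hv
        by_contra hno
        push_neg at hno
        have hvne : v ≠ 0 := by
          intro h0; exact hno 0 (by rw [h0, zero_smul])
        have hcruv : crossProduct u v ≠ 0 := by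
          intro h0
          obtain ⟨c₅, hc₅⟩ := cross0 hune h0
          exact hno c₅ hc₅
        have huv : u ⬝ᵥ v = 0 := by
          have h1 : (N*N).mulVec v = 0 := by
            rw [← Matrix.mulVec_mulVec, hv, Matrix.mulVec_zero]
          rw [hNNmv v] at h1
          rcases smul_eq_zero.mp h1 with h | h
          · rcases mul_eq_zero.mp h with h' | h'
            · exact absurd h' hμ
            · exact h'
          · exact absurd h hune
        have hcoldot : ∀ (j : Fin 3) (z : Fin 3 → ℂ), N.mulVec z = 0 →
            (fun i => N i j) ⬝ᵥ z = 0 := by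
          intro j z hz
          have h1 : (fun i => N i j) ⬝ᵥ z = (N.mulVec z) j := by
            simp only [dotProduct, Matrix.mulVec, Fin.sum_univ_three]
            rw [sym_apply hsym 0 j, sym_apply hsym 1 j, sym_apply hsym 2 j]
          rw [h1, hz]
          rfl
        have hcols : ∀ j, ∃ m : ℂ, (fun i => N i j) = m • (crossProduct u v) := by
          intro j
          apply cross0 hcruv
          have h1 : crossProduct (fun i => N i j) (crossProduct u v) = 0 := by
            rw [bac_cab, hcoldot j v hv, hcoldot j u hNu0, zero_smul, zero_smul, sub_zero]
          rw [← neg_eq_zero, cross_anticomm] at h1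
          exact h1
        obtain ⟨c₆, hc₆⟩ := sym_rank1 hsym hcruv hcols
        have hqq : (crossProduct u v) ⬝ᵥ (crossProduct u v) = 0 := by
          rw [lagrange, huu, huv]
          ring
        have h7 : N * N = 0 := by
          rw [hc₆, smul_vmv_sq, hqq, mul_zero, zero_smul]
        rw [hNN2] at h7
        rcases smul_eq_zero.mp h7 with h | h
        · exact absurd h hμ
        · rcases (vmv_eq_zero_iff _ _).mp h with h' | h'
          · exact absurd h' hune
          · exact absurd h' hune
      refine ⟨u, hune, huu, fun x y hx hy => ?_⟩
      have h1 : N.mulVec (N.mulVec y) = 0 := by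
        rw [Matrix.mulVec_mulVec, hNNmv y, hy, mul_zero, zero_smul]
      obtain ⟨c₇, hc₇⟩ := hker _ h1
      rw [hc₇, dotProduct_smul, smul_eq_mul,
        show x ⬝ᵥ u = 0 from by rw [dotProduct_comm]; exact hx, mul_zero]
    · -- σ ≠ 0
      have hσ2 : σ / 2 ≠ 0 := div_ne_zero hσ0 two_ne_zero
      have hdet : N.det = 0 := by
        by_contra hd
        have hunit : IsUnit N.det := isUnit_iff_ne_zero.mpr hd
        have h1 : N * (D * D) = 0 := by
          rw [← Matrix.mul_assoc, ← hDN, Matrix.mul_assoc, ← hDN, ← Matrix.mul_assoc, hH']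
        have hDD : D * D = 0 := cancel_left hunit h1
        have htrD : D.trace = σ := by
          rw [hD, Matrix.trace_sub, Matrix.trace_smul, Matrix.trace_smul, trace_one3, ← hσ]
          simp only [smul_eq_mul]
          ring
        by_cases hDz : D = 0
        · rw [hDz, Matrix.trace_zero] at htrD
          exact hσ0 htrD.symm
        · obtain ⟨c', u', hD', hu'ne, hu'u', hc'ne⟩ := sq_zero_struct hDsym hDD hDz
          rw [hD', Matrix.trace_smul, vmv_trace, hu'u'] at htrD
          simp only [smul_eq_mul, mul_zero] at htrD
          exact hσ0 htrD.symm
      obtain ⟨k, hkne, hk⟩ := (Matrix.exists_mulVec_eq_zero_iff).mpr hdet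
      have hsk : u ⬝ᵥ k = 0 := by
        have h1 : (σ/2) * (u ⬝ᵥ k) = 0 := by
          rw [← smul_eq_mul, ← smul_dotProduct, ← hNu, symdot hsym, hk, dotProduct_zero]
        rcases mul_eq_zero.mp h1 with h | h
        · exact absurd h hσ2
        · exact h
      have hcr : crossProduct u k ≠ 0 := by
        intro h0
        obtain ⟨c₄, hc₄⟩ := cross0 hune h0
        rw [hc₄, Matrix.mulVec_smul, hNu, smul_smul] at hk
        rcases smul_eq_zero.mp hk with h | h
        · rcases mul_eq_zero.mp h with h' | h'
          · exact hkne (by rw [hc₄, h', zero_smul])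
          · exact absurd h' hσ2
        · exact absurd h hune
      exact ⟨u, hune, huu, prop_lemma hsym hune huu hNu hk hsk hcr⟩
end keyprop

section recon
variable {S : Matrix (Fin 3) (Fin 3) ℂ}

lemma dot_cross_assoc (a b c : Fin 3 → ℂ) :
    a ⬝ᵥ (crossProduct b c) = (crossProduct a b) ⬝ᵥ c := by
  simp [crossProduct, dotProduct, Fin.sum_univ_three]
  ring

lemma gram_dot (S : Matrix (Fin 3) (Fin 3) ℂ) (x y : Fin 3 → ℂ) :
    (S.mulVec x) ⬝ᵥ (S.mulVec y) = x ⬝ᵥ ((Sᵀ * S).mulVec y) := by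
  rw [← Matrix.mulVec_mulVec, Matrix.dotProduct_mulVec x Sᵀ, Matrix.vecMul_transpose]

lemma single_self_dot (i : Fin 3) : (Pi.single i 1 : Fin 3 → ℂ) ⬝ᵥ Pi.single i 1 = 1 := by
  rw [single_dotProduct, one_mul, Pi.single_eq_same]

lemma reconstruct (s₂ : Fin 3 → ℂ) (hne : s₂ ≠ 0) (hiso : s₂ ⬝ᵥ s₂ = 0)
    (hprop : ∀ x y, s₂ ⬝ᵥ x = 0 → s₂ ⬝ᵥ y = 0 → (S.mulVec x) ⬝ᵥ (S.mulVec y) = 0) :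
    ∃ s₁ t₁ t₂ s₂' : Fin 3 → ℂ, s₁ ≠ 0 ∧ s₂' ≠ 0 ∧ s₁ ⬝ᵥ s₁ = 0 ∧ s₂' ⬝ᵥ s₂' = 0 ∧
      S = vecMulVec s₁ t₁ + vecMulVec t₂ s₂' := by
  obtain ⟨ie, hie⟩ := ne_zero_coord hne
  set e : Fin 3 → ℂ := Pi.single ie 1 with he
  have hd : s₂ ⬝ᵥ e = s₂ ie := by rw [he, dotProduct_single, mul_one]
  have hdne : s₂ ⬝ᵥ e ≠ 0 := by rw [hd]; exact hie
  set d := s₂ ⬝ᵥ e with hdd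
  set w : Fin 3 → ℂ := crossProduct s₂ e with hw
  have hs₂w : s₂ ⬝ᵥ w = 0 := dot_self_cross _ _
  have hwne : w ≠ 0 := by
    intro h0
    obtain ⟨ce, hce⟩ := cross0 hne h0
    have h1 : e ⬝ᵥ e = (1 : ℂ) := single_self_dot ie
    rw [hce, smul_dotProduct, dotProduct_smul, hiso] at h1
    simp at h1
  set a := S.mulVec s₂ with ha
  set b := S.mulVec w with hb
  have haa : a ⬝ᵥ a = 0 := hprop _ _ hiso hiso
  have hab : a ⬝ᵥ b = 0 := hprop _ _ hiso hs₂w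
  have hbb : b ⬝ᵥ b = 0 := hprop _ _ hs₂w hs₂w
  obtain ⟨s₁, hs₁ne, hs₁iso, κ₁, κ₂, hka, hkb⟩ :
      ∃ s₁ : Fin 3 → ℂ, s₁ ≠ 0 ∧ s₁ ⬝ᵥ s₁ = 0 ∧ ∃ κ₁ κ₂ : ℂ,
        a = κ₁ • s₁ ∧ b = κ₂ • s₁ := by
    by_cases hane : a = 0
    · by_cases hbne : b = 0
      · exact ⟨![1, Complex.I, 0], iso_vec_ne, iso_vec_iso, 0, 0,
          by rw [hane, zero_smul], by rw [hbne, zero_smul]⟩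
      · exact ⟨b, hbne, hbb, 0, 1, by rw [hane, zero_smul], by rw [one_smul]⟩
    · obtain ⟨κ, hκ⟩ := iso2 hane haa hbb hab
      exact ⟨a, hane, haa, 1, κ, by rw [one_smul], hκ⟩
  -- cross-dot values
  have hcross : crossProduct s₂ w = d • s₂ := by
    rw [hw, bac_cab, hiso, zero_smul, sub_zero, hdd]
  have c1 : (crossProduct w e) ⬝ᵥ s₂ = d^2 := by
    rw [dotProduct_comm, dot_cross_assoc, hcross, smul_dotProduct, smul_eq_mul, hdd]
    ring
  have c2 : (crossProduct e s₂) ⬝ᵥ s₂ = 0 := by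
    rw [dotProduct_comm]; exact dot_cross_self e s₂
  have c3 : (crossProduct w e) ⬝ᵥ w = 0 := by
    rw [dotProduct_comm]; exact dot_self_cross w e
  have c4 : (crossProduct e s₂) ⬝ᵥ w = d^2 := by
    rw [dotProduct_comm, dot_cross_assoc, ← c1, dotProduct_comm]
  have c5 : (crossProduct w e) ⬝ᵥ e = 0 := by
    rw [dotProduct_comm]; exact dot_cross_self w e
  have c6 : (crossProduct e s₂) ⬝ᵥ e = 0 := by
    rw [dotProduct_comm]; exact dot_self_cross e s₂
  set t₁ : Fin 3 → ℂ := (d^2)⁻¹ • (κ₁ • (crossProduct w e) + κ₂ • (crossProduct e s₂))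
    with ht₁
  set t₂ : Fin 3 → ℂ := d⁻¹ • (S.mulVec e) with ht₂
  have hd2ne : (d:ℂ)^2 ≠ 0 := pow_ne_zero 2 hdne
  have ht₁s₂ : t₁ ⬝ᵥ s₂ = κ₁ := by
    rw [ht₁, smul_dotProduct, add_dotProduct, smul_dotProduct, smul_dotProduct, c1, c2]
    simp only [smul_eq_mul, mul_zero, add_zero, zero_add]
    field_simp
  have ht₁w : t₁ ⬝ᵥ w = κ₂ := by
    rw [ht₁, smul_dotProduct, add_dotProduct, smul_dotProduct, smul_dotProduct, c3, c4]
    simp only [smul_eq_mul, mul_zero, add_zero, zero_add]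
    field_simp
  have ht₁e : t₁ ⬝ᵥ e = 0 := by
    rw [ht₁, smul_dotProduct, add_dotProduct, smul_dotProduct, smul_dotProduct, c5, c6]
    simp
  set R : Matrix (Fin 3) (Fin 3) ℂ := vecMulVec s₁ t₁ + vecMulVec t₂ s₂ with hR
  have hRmv : ∀ z, R.mulVec z = (t₁ ⬝ᵥ z) • s₁ + (s₂ ⬝ᵥ z) • t₂ := by
    intro z
    rw [hR, Matrix.add_mulVec, vmv_mulVec, vmv_mulVec]
  have hz1 : S.mulVec s₂ = R.mulVec s₂ := by
    rw [hRmv, ht₁s₂, hiso, zero_smul, add_zero, ← ha, hka]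
  have hz2 : S.mulVec w = R.mulVec w := by
    rw [hRmv, ht₁w, hs₂w, zero_smul, add_zero, ← hb, hkb]
  have hz3 : S.mulVec e = R.mulVec e := by
    rw [hRmv, ht₁e, zero_smul, zero_add, ht₂, ← hdd, smul_smul]
    rw [mul_inv_cancel₀ hdne, one_smul]
  have hkey : ∀ x, S.mulVec x = R.mulVec x := by
    intro x
    have hexp := triple_exp s₂ w e x
    have hΔ : (crossProduct s₂ w) ⬝ᵥ e = d^2 := by
      rw [hcross, smul_dotProduct, smul_eq_mul, ← hdd]
      ring
    rw [hΔ] at hexp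
    have h1 := congrArg (fun v => S.mulVec v) hexp
    have h2 := congrArg (fun v => R.mulVec v) hexp
    simp only [Matrix.mulVec_add, Matrix.mulVec_smul] at h1 h2
    rw [hz1, hz2, hz3] at h1
    have h3 : (d^2 : ℂ) • S.mulVec x = (d^2 : ℂ) • R.mulVec x := h1.trans h2.symm
    have h4 := congrArg (fun v => ((d^2:ℂ))⁻¹ • v) h3
    simpa [smul_smul, inv_mul_cancel₀ hd2ne] using h4
  refine ⟨s₁, t₁, t₂, s₂, hs₁ne, hne, hs₁iso, hiso, ?_⟩
  ext i j
  have h5 := congrFun (hkey (Pi.single j 1)) i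
  rw [Matrix.mulVec_single, Matrix.mulVec_single] at h5
  simpa [hR] using h5
end recon

section main

lemma forward_dir (s₁ t₁ t₂ s₂ : Fin 3 → ℂ) (h1 : s₁ ⬝ᵥ s₁ = 0) (h2 : s₂ ⬝ᵥ s₂ = 0)
    (S : Matrix (Fin 3) (Fin 3) ℂ) (hS : S = vecMulVec s₁ t₁ + vecMulVec t₂ s₂) :
    ((S * Sᵀ).trace • (1 : Matrix (Fin 3) (Fin 3) ℂ) - (2 : ℂ) • (S * Sᵀ)) ^ 2 * S = 0 := by
  have hST : Sᵀ = vecMulVec t₁ s₁ + vecMulVec s₂ t₂ := by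
    rw [hS, Matrix.transpose_add, vmv_transpose, vmv_transpose]
  set a := t₁ ⬝ᵥ t₁ with hadef
  set b := t₁ ⬝ᵥ s₂ with hbdef
  set c := s₁ ⬝ᵥ t₂ with hcdef
  set dd := t₂ ⬝ᵥ t₂ with hddef
  set W : Matrix (Fin 3) (Fin 3) ℂ := vecMulVec s₁ s₂ with hWdef
  have hM : S * Sᵀ = a • vecMulVec s₁ s₁ + b • vecMulVec s₁ t₂ + b • vecMulVec t₂ s₁ := by
    rw [hST, hS]
    simp only [Matrix.add_mul, Matrix.mul_add, vmv_mul_vmv]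
    rw [h2, zero_smul, add_zero, dotProduct_comm s₂ t₁, ← hadef, ← hbdef]
    abel
  have htr : (S * Sᵀ).trace = 2 * (b * c) := by
    rw [hM, Matrix.trace_add, Matrix.trace_add, Matrix.trace_smul, Matrix.trace_smul,
      Matrix.trace_smul, vmv_trace, vmv_trace, vmv_trace, h1, dotProduct_comm t₂ s₁,
      ← hcdef]
    simp only [smul_eq_mul]
    ring
  have hMS : (S * Sᵀ) * S = (b * c) • S + (a * c + b * dd) • W := by
    rw [hM, hS]
    simp only [Matrix.add_mul, Matrix.mul_add, Matrix.smul_mul, vmv_mul_vmv, smul_smul,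
      hWdef]
    rw [h1, dotProduct_comm t₂ s₁, ← hcdef, ← hddef]
    ext i j
    simp only [Matrix.add_apply, Matrix.smul_apply, vecMulVec_apply, smul_eq_mul,
      Matrix.zero_apply, zero_mul, mul_zero]
    ring
  have hMW : (S * Sᵀ) * W = (b * c) • W := by
    rw [hM, hWdef]
    simp only [Matrix.add_mul, Matrix.smul_mul, vmv_mul_vmv, smul_smul]
    rw [h1, dotProduct_comm t₂ s₁, ← hcdef]
    ext i j
    simp only [Matrix.add_apply, Matrix.smul_apply, vecMulVec_apply, smul_eq_mul,
      Matrix.zero_apply, zero_mul, mul_zero]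
    ring
  set T : Matrix (Fin 3) (Fin 3) ℂ :=
    (S * Sᵀ).trace • (1 : Matrix (Fin 3) (Fin 3) ℂ) - (2 : ℂ) • (S * Sᵀ) with hT
  have hTS : T * S = (-(2 * (a * c + b * dd))) • W := by
    rw [hT, Matrix.sub_mul, Matrix.smul_mul, Matrix.one_mul, Matrix.smul_mul, hMS, htr]
    ext i j
    simp only [Matrix.sub_apply, Matrix.add_apply, Matrix.smul_apply, smul_eq_mul]
    ring
  have hTW : T * W = 0 := by
    rw [hT, Matrix.sub_mul, Matrix.smul_mul, Matrix.one_mul, Matrix.smul_mul, hMW, htr]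
    ext i j
    simp only [Matrix.sub_apply, Matrix.smul_apply, smul_eq_mul, Matrix.zero_apply]
    ring
  rw [pow_two, Matrix.mul_assoc, hTS, Matrix.mul_smul, hTW, smul_zero]

lemma backward_dir (S : Matrix (Fin 3) (Fin 3) ℂ)
    (hRHS : ((S * Sᵀ).trace • (1 : Matrix (Fin 3) (Fin 3) ℂ) - (2 : ℂ) • (S * Sᵀ)) ^ 2 * S
      = 0) :
    ∃ s₁ t₁ t₂ s₂' : Fin 3 → ℂ, s₁ ≠ 0 ∧ s₂' ≠ 0 ∧ s₁ ⬝ᵥ s₁ = 0 ∧ s₂' ⬝ᵥ s₂' = 0 ∧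
      S = vecMulVec s₁ t₁ + vecMulVec t₂ s₂' := by
  set N : Matrix (Fin 3) (Fin 3) ℂ := Sᵀ * S with hN
  have hNsym : Nᵀ = N := by
    rw [hN, Matrix.transpose_mul, Matrix.transpose_transpose]
  have htrN : N.trace = (S * Sᵀ).trace := Matrix.trace_mul_comm Sᵀ S
  set T : Matrix (Fin 3) (Fin 3) ℂ :=
    (S * Sᵀ).trace • (1 : Matrix (Fin 3) (Fin 3) ℂ) - (2 : ℂ) • (S * Sᵀ) with hT
  set D : Matrix (Fin 3) (Fin 3) ℂ :=
    N.trace • (1 : Matrix (Fin 3) (Fin 3) ℂ) - (2 : ℂ) • N with hD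
  have hTsym : Tᵀ = T := by
    rw [hT, Matrix.transpose_sub, Matrix.transpose_smul, Matrix.transpose_smul,
      Matrix.transpose_one, Matrix.transpose_mul, Matrix.transpose_transpose]
  have hDS : D * Sᵀ = Sᵀ * T := by
    rw [hD, hT, htrN, Matrix.sub_mul, Matrix.mul_sub, Matrix.smul_mul, Matrix.mul_smul,
      Matrix.smul_mul, Matrix.mul_smul, Matrix.one_mul, Matrix.mul_one, hN,
      Matrix.mul_assoc]
  have hST2 : Sᵀ * (T * T) = 0 := by
    have h1 : (T ^ 2 * S)ᵀ = Sᵀ * (T * T) := by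
      rw [Matrix.transpose_mul, pow_two, Matrix.transpose_mul, hTsym]
    rw [hRHS] at h1
    simpa using h1.symm
  have hD2N : (N.trace • (1 : Matrix (Fin 3) (Fin 3) ℂ) - (2 : ℂ) • N) ^ 2 * N = 0 := by
    have e2 : (D * D) * Sᵀ = Sᵀ * (T * T) := by
      rw [Matrix.mul_assoc, hDS, ← Matrix.mul_assoc, hDS, Matrix.mul_assoc]
    rw [← hD, pow_two, hN, ← Matrix.mul_assoc, e2, hST2, Matrix.zero_mul]
  obtain ⟨s₂, hs₂ne, hs₂iso, hprop⟩ := keyprop hNsym hD2N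
  apply reconstruct s₂ hs₂ne hs₂iso
  intro x y hx hy
  rw [gram_dot, ← hN]
  exact hprop x y hx hy

end main


theorem stmt_6 (S : Matrix (Fin 3) (Fin 3) ℂ) :
    IsTrifocalEssential S ↔
      ((S * Sᵀ).trace • (1 : Matrix (Fin 3) (Fin 3) ℂ) - (2 : ℂ) • (S * Sᵀ)) ^ 2 * S = 0 := by
  constructor
  · rintro ⟨s₁, t₁, t₂, s₂, hs₁ne, hs₂ne, h1, h2, hS⟩
    exact forward_dir s₁ t₁ t₂ s₂ h1 h2 S hS
  · intro h
    obtain ⟨s₁, t₁, t₂, s₂', hs₁ne, hs₂ne, h1, h2, hS⟩ := backward_dir S h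
    exact ⟨s₁, t₁, t₂, s₂', hs₁ne, hs₂ne, h1, h2, hS⟩
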